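/- For the regular pentagon's reduced slap map, with J = [(3-√5)/2, (√5-1)/2] and B = [(9-√5)/16, (7+√5)/16], the cocycle value satisfies α₄(x) = -2δ(x) for x ∈ J\B (away from 1/2 and discontinuities) and α₄(x) = 0 for x ∈ B (away from 1/2 and discontinuities). Consequently F₅⁴(B × {s}) ⊆ J × {s} for every s ∈ ℤ₅. -/

import Mathlib

set_option maxHeartbeats 1000000

/-- The reduced slap map of the regular pentagon. -/
noncomputable def phiRed5 (x : ℝ) : ℝ :=
  Int.fract (-(1 / Real.cos (Real.pi / 5)) * (x - 1 / 2))

/-- `δ(x) = -1` if `x < 1/2`, and `1` if `x > 1/2`. -/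
noncomputable def deltaSgn (x : ℝ) : ℤ := if x < 1 / 2 then -1 else 1

/-- The cocycle `α_n(x) = 2 Σ_{i=0}^{n-1} δ(φ₅^i(x))` (since `⌊5/2⌋ = 2`). -/
noncomputable def alpha5 (n : ℕ) (x : ℝ) : ℤ :=
  2 * ∑ i ∈ Finset.range n, deltaSgn (phiRed5^[i] x)

private lemma sqrt5_sq : Real.sqrt 5 ^ 2 = 5 := Real.sq_sqrt (by norm_num)

private lemma phiRed5_eq (x : ℝ) :
    phiRed5 x = Int.fract ((Real.sqrt 5 - 1) * (1/2 - x)) := by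
  have hc : Real.cos (Real.pi / 5) = (1 + Real.sqrt 5) / 4 := Real.cos_pi_div_five
  have hpos : (0:ℝ) < 1 + Real.sqrt 5 := by positivity
  have key : -(1 / Real.cos (Real.pi / 5)) * (x - 1/2) = (Real.sqrt 5 - 1) * (1/2 - x) := by
    rw [hc]
    field_simp
    linear_combination (2*x - 1) * sqrt5_sq
  rw [phiRed5, key]

private lemma phi_pos {s x : ℝ} (hsd : s = Real.sqrt 5)
    (h0 : 0 ≤ (s - 1) * (1/2 - x)) (h1 : (s - 1) * (1/2 - x) < 1) :
    phiRed5 x = (s - 1) * (1/2 - x) := by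
  subst hsd
  rw [phiRed5_eq]
  exact Int.fract_eq_self.2 ⟨h0, h1⟩

private lemma phi_neg {s x : ℝ} (hsd : s = Real.sqrt 5)
    (h0 : -1 ≤ (s - 1) * (1/2 - x)) (h1 : (s - 1) * (1/2 - x) < 0) :
    phiRed5 x = (s - 1) * (1/2 - x) + 1 := by
  subst hsd
  rw [phiRed5_eq]
  have hf : ⌊(Real.sqrt 5 - 1) * (1/2 - x)⌋ = -1 := by
    rw [Int.floor_eq_iff]
    constructor <;> push_cast <;> linarith
  rw [Int.fract, hf]
  push_cast
  ring

private lemma alpha5_four (x : ℝ) :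
    alpha5 4 x = 2 * (deltaSgn x + deltaSgn (phiRed5 x) + deltaSgn (phiRed5 (phiRed5 x))
      + deltaSgn (phiRed5 (phiRed5 (phiRed5 x)))) := by
  have h0 : phiRed5^[0] x = x := rfl
  have h1 : phiRed5^[1] x = phiRed5 x := rfl
  have h2 : phiRed5^[2] x = phiRed5 (phiRed5 x) := rfl
  have h3 : phiRed5^[3] x = phiRed5 (phiRed5 (phiRed5 x)) := rfl
  rw [alpha5, Finset.sum_range_succ, Finset.sum_range_succ, Finset.sum_range_succ,
    Finset.sum_range_one, h0, h1, h2, h3]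

private lemma dlt {y : ℝ} (h : y < 1/2) : deltaSgn y = -1 := by
  rw [deltaSgn, if_pos h]

private lemma dgt {y : ℝ} (h : 1/2 < y) : deltaSgn y = 1 := by
  rw [deltaSgn, if_neg (not_lt.2 h.le)]

section cases
variable {s x : ℝ}

/-- Case A: `x ∈ [e, b)`, lower part of `J \ B`. -/
private lemma case_A (hsd : s = Real.sqrt 5) (hx1 : (3 - s)/2 ≤ x) (hx2 : x < (9 - s)/16) :
    alpha5 4 x = -8 ∧ deltaSgn x = -1 := by
  have hs : s^2 = 5 := by rw [hsd]; exact sqrt5_sq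
  have hs0 : 0 ≤ s := by rw [hsd]; exact Real.sqrt_nonneg 5
  have h2s : 2 < s := by nlinarith
  have h3s : s < 9/4 := by nlinarith
  have hsx : s^2 * x = 5 * x := by rw [hs]
  have hp1 : s * ((3 - s)/2) ≤ s * x := mul_le_mul_of_nonneg_left hx1 hs0
  have hp2 : s * x < s * ((9 - s)/16) := mul_lt_mul_of_pos_left hx2 (by linarith)
  have h1 : phiRed5 x = (s - 1)/2 - (s - 1)*x := by
    rw [phi_pos hsd (by nlinarith [hs, hsx, hp1, hp2]) (by nlinarith [hs, hsx, hp1, hp2])]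
    ring
  have h2 : phiRed5 (phiRed5 x) = (3*s - 7)/2 + (6 - 2*s)*x := by
    rw [h1, phi_pos hsd (by nlinarith [hs, hsx, hp1, hp2]) (by nlinarith [hs, hsx, hp1, hp2])]
    linear_combination (x - 1/2) * hs
  have h3 : phiRed5 (phiRed5 (phiRed5 x)) = (11*s - 23)/2 + (16 - 8*s)*x := by
    rw [h2, phi_pos hsd (by nlinarith [hs, hsx, hp1, hp2]) (by nlinarith [hs, hsx, hp1, hp2])]
    linear_combination (2*x - 3/2) * hs
  refine ⟨?_, dlt (by nlinarith [hs, hsx, hp1, hp2])⟩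
  rw [alpha5_four, h3, h2, h1,
    dlt (show x < 1/2 by nlinarith [hs, hsx, hp1, hp2]),
    dlt (show (s - 1)/2 - (s - 1)*x < 1/2 by nlinarith [hs, hsx, hp1, hp2]),
    dlt (show (3*s - 7)/2 + (6 - 2*s)*x < 1/2 by nlinarith [hs, hsx, hp1, hp2]),
    dlt (show (11*s - 23)/2 + (16 - 8*s)*x < 1/2 by nlinarith [hs, hsx, hp1, hp2])]
  ring

/-- Case B: `x ∈ ((7+√5)/16, (√5-1)/2]`, upper part of `J \ B`. -/
private lemma case_B (hsd : s = Real.sqrt 5) (hx1 : (7 + s)/16 < x) (hx2 : x ≤ (s - 1)/2) :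
    alpha5 4 x = 8 ∧ deltaSgn x = 1 := by
  have hs : s^2 = 5 := by rw [hsd]; exact sqrt5_sq
  have hs0 : 0 ≤ s := by rw [hsd]; exact Real.sqrt_nonneg 5
  have h2s : 2 < s := by nlinarith
  have h3s : s < 9/4 := by nlinarith
  have hsx : s^2 * x = 5 * x := by rw [hs]
  have hp1 : s * ((7 + s)/16) < s * x := mul_lt_mul_of_pos_left hx1 (by linarith)
  have hp2 : s * x ≤ s * ((s - 1)/2) := mul_le_mul_of_nonneg_left hx2 hs0
  have h1 : phiRed5 x = (s + 1)/2 - (s - 1)*x := by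
    rw [phi_neg hsd (by nlinarith [hs, hsx, hp1, hp2]) (by nlinarith [hs, hsx, hp1, hp2])]
    ring
  have h2 : phiRed5 (phiRed5 x) = (6 - 2*s)*x + (s - 3)/2 := by
    rw [h1, phi_neg hsd (by nlinarith [hs, hsx, hp1, hp2]) (by nlinarith [hs, hsx, hp1, hp2])]
    linear_combination (x - 1/2) * hs
  have h3 : phiRed5 (phiRed5 (phiRed5 x)) = (16 - 8*s)*x + (5*s - 7)/2 := by
    rw [h2, phi_neg hsd (by nlinarith [hs, hsx, hp1, hp2]) (by nlinarith [hs, hsx, hp1, hp2])]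
    linear_combination (2*x - 1/2) * hs
  refine ⟨?_, dgt (by nlinarith [hs, hsx, hp1, hp2])⟩
  rw [alpha5_four, h3, h2, h1,
    dgt (show (1:ℝ)/2 < x by nlinarith [hs, hsx, hp1, hp2]),
    dgt (show (1:ℝ)/2 < (s + 1)/2 - (s - 1)*x by nlinarith [hs, hsx, hp1, hp2]),
    dgt (show (1:ℝ)/2 < (6 - 2*s)*x + (s - 3)/2 by nlinarith [hs, hsx, hp1, hp2]),
    dgt (show (1:ℝ)/2 < (16 - 8*s)*x + (5*s - 7)/2 by nlinarith [hs, hsx, hp1, hp2])]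
  ring

/-- Case C: `x ∈ [b, 1/2)`, lower part of `B`. -/
private lemma case_C (hsd : s = Real.sqrt 5) (hx1 : (9 - s)/16 ≤ x) (hx2 : x < 1/2)
    (hreg : phiRed5 (phiRed5 x) ≠ 1/2) :
    alpha5 4 x = 0 ∧
    phiRed5 (phiRed5 (phiRed5 (phiRed5 x))) ∈ Set.Icc ((3 - s)/2) ((s - 1)/2) := by
  have hs : s^2 = 5 := by rw [hsd]; exact sqrt5_sq
  have hs0 : 0 ≤ s := by rw [hsd]; exact Real.sqrt_nonneg 5
  have h2s : 2 < s := by nlinarith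
  have h3s : s < 9/4 := by nlinarith
  have hsx : s^2 * x = 5 * x := by rw [hs]
  have hp1 : s * ((9 - s)/16) ≤ s * x := mul_le_mul_of_nonneg_left hx1 hs0
  have hp2 : s * x < s * (1/2) := mul_lt_mul_of_pos_left hx2 (by linarith)
  have h1 : phiRed5 x = (s - 1)/2 - (s - 1)*x := by
    rw [phi_pos hsd (by nlinarith [hs, hsx, hp1, hp2]) (by nlinarith [hs, hsx, hp1, hp2])]
    ring
  have h2 : phiRed5 (phiRed5 x) = (3*s - 7)/2 + (6 - 2*s)*x := by
    rw [h1, phi_pos hsd (by nlinarith [hs, hsx, hp1, hp2]) (by nlinarith [hs, hsx, hp1, hp2])]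
    linear_combination (x - 1/2) * hs
  -- From regularity, φ²(x) ≠ 1/2, hence φ²(x) > 1/2 strictly.
  have hne : (3*s - 7)/2 + (6 - 2*s)*x ≠ 1/2 := by rw [← h2]; exact hreg
  have hy2 : 1/2 < (3*s - 7)/2 + (6 - 2*s)*x := by
    have hge : 1/2 ≤ (3*s - 7)/2 + (6 - 2*s)*x := by nlinarith [hs, hsx, hp1, hp2]
    exact lt_of_le_of_ne hge (Ne.symm hne)
  have h3 : phiRed5 (phiRed5 (phiRed5 x)) = (16 - 8*s)*x + (11*s - 21)/2 := by
    rw [h2, phi_neg hsd (by nlinarith [hs, hsx, hp1, hp2, hy2])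
      (by nlinarith [hs, hsx, hp1, hp2, hy2])]
    linear_combination (2*x - 3/2) * hs
  have h4 : phiRed5 (phiRed5 (phiRed5 (phiRed5 x))) = (56 - 24*s)*x + (33*s - 75)/2 := by
    rw [h3, phi_neg hsd (by nlinarith [hs, hsx, hp1, hp2, hy2])
      (by nlinarith [hs, hsx, hp1, hp2, hy2])]
    linear_combination (8*x - 11/2) * hs
  constructor
  · rw [alpha5_four, h3, h2, h1,
      dlt hx2,
      dlt (show (s - 1)/2 - (s - 1)*x < 1/2 by nlinarith [hs, hsx, hp1, hp2]),
      dgt hy2,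
      dgt (show (1:ℝ)/2 < (16 - 8*s)*x + (11*s - 21)/2 by nlinarith [hs, hsx, hp1, hp2])]
    ring
  · rw [h4]
    constructor
    · nlinarith [hs, hsx, hp1, hp2]
    · nlinarith [hs, hsx, hp1, hp2]

/-- Case D: `x ∈ (1/2, 1-b]`, upper part of `B`. -/
private lemma case_D (hsd : s = Real.sqrt 5) (hx1 : 1/2 < x) (hx2 : x ≤ (7 + s)/16)
    (hreg : phiRed5 (phiRed5 x) ≠ 1/2) :
    alpha5 4 x = 0 ∧
    phiRed5 (phiRed5 (phiRed5 (phiRed5 x))) ∈ Set.Icc ((3 - s)/2) ((s - 1)/2) := by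
  have hs : s^2 = 5 := by rw [hsd]; exact sqrt5_sq
  have hs0 : 0 ≤ s := by rw [hsd]; exact Real.sqrt_nonneg 5
  have h2s : 2 < s := by nlinarith
  have h3s : s < 9/4 := by nlinarith
  have hsx : s^2 * x = 5 * x := by rw [hs]
  have hp1 : s * (1/2) < s * x := mul_lt_mul_of_pos_left hx1 (by linarith)
  have hp2 : s * x ≤ s * ((7 + s)/16) := mul_le_mul_of_nonneg_left hx2 hs0
  have h1 : phiRed5 x = (s + 1)/2 - (s - 1)*x := by
    rw [phi_neg hsd (by nlinarith [hs, hsx, hp1, hp2]) (by nlinarith [hs, hsx, hp1, hp2])]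
    ring
  have h2 : phiRed5 (phiRed5 x) = (6 - 2*s)*x + (s - 3)/2 := by
    rw [h1, phi_neg hsd (by nlinarith [hs, hsx, hp1, hp2]) (by nlinarith [hs, hsx, hp1, hp2])]
    linear_combination (x - 1/2) * hs
  have hne : (6 - 2*s)*x + (s - 3)/2 ≠ 1/2 := by rw [← h2]; exact hreg
  have hy2 : (6 - 2*s)*x + (s - 3)/2 < 1/2 := by
    have hle : (6 - 2*s)*x + (s - 3)/2 ≤ 1/2 := by nlinarith [hs, hsx, hp1, hp2]
    exact lt_of_le_of_ne hle hne
  have h3 : phiRed5 (phiRed5 (phiRed5 x)) = (16 - 8*s)*x + (5*s - 9)/2 := by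
    rw [h2, phi_pos hsd (by nlinarith [hs, hsx, hp1, hp2])
      (by nlinarith [hs, hsx, hp1, hp2])]
    linear_combination (2*x - 1/2) * hs
  have h4 : phiRed5 (phiRed5 (phiRed5 (phiRed5 x))) = (56 - 24*s)*x + (15*s - 35)/2 := by
    rw [h3, phi_pos hsd (by nlinarith [hs, hsx, hp1, hp2])
      (by nlinarith [hs, hsx, hp1, hp2])]
    linear_combination (8*x - 5/2) * hs
  constructor
  · rw [alpha5_four, h3, h2, h1,
      dgt hx1,
      dgt (show (1:ℝ)/2 < (s + 1)/2 - (s - 1)*x by nlinarith [hs, hsx, hp1, hp2]),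
      dlt hy2,
      dlt (show (16 - 8*s)*x + (5*s - 9)/2 < 1/2 by nlinarith [hs, hsx, hp1, hp2])]
    ring
  · rw [h4]
    constructor
    · nlinarith [hs, hsx, hp1, hp2]
    · nlinarith [hs, hsx, hp1, hp2]

end cases

/-- With `J = [(3-√5)/2, (√5-1)/2]` and `B = [(9-√5)/16, (7+√5)/16]`: for
regular `x ∈ J \ B`, `α₄(x) = -2δ(x)` in `ℤ₅`; for regular `x ∈ B`,
`α₄(x) = 0` in `ℤ₅`; consequently `F₅⁴(B × {s}) ⊆ J × {s}` for every `s ∈ ℤ₅`,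
i.e. `φ₅⁴` maps `B` into `J` with no drift in the fibre. -/
theorem stmt_11 :
    (∀ x ∈ Set.Icc ((3 - Real.sqrt 5) / 2) ((Real.sqrt 5 - 1) / 2) \
        Set.Icc ((9 - Real.sqrt 5) / 16) ((7 + Real.sqrt 5) / 16),
      (∀ i < 4, phiRed5^[i] x ≠ 1 / 2) →
      ((alpha5 4 x : ℤ) : ZMod 5) = ((-2 * deltaSgn x : ℤ) : ZMod 5)) ∧
    (∀ x ∈ Set.Icc ((9 - Real.sqrt 5) / 16) ((7 + Real.sqrt 5) / 16),
      (∀ i < 4, phiRed5^[i] x ≠ 1 / 2) →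
      ((alpha5 4 x : ℤ) : ZMod 5) = 0 ∧
      phiRed5^[4] x ∈ Set.Icc ((3 - Real.sqrt 5) / 2) ((Real.sqrt 5 - 1) / 2)) := by
  constructor
  · rintro x ⟨⟨hxl, hxu⟩, hnb⟩ _
    rw [Set.mem_Icc] at hnb
    push_neg at hnb
    rcases lt_or_ge x ((9 - Real.sqrt 5) / 16) with h | h
    · obtain ⟨ha, hd⟩ := case_A rfl hxl h
      rw [ha, hd]
      decide
    · obtain ⟨ha, hd⟩ := case_B rfl (hnb h) hxu
      rw [ha, hd]
      decide
  · rintro x ⟨hxl, hxu⟩ hreg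
    have hx0 : x ≠ 1/2 := by
      have := hreg 0 (by norm_num)
      simpa using this
    have hreg2 : phiRed5 (phiRed5 x) ≠ 1/2 := by
      have := hreg 2 (by norm_num)
      have he : phiRed5^[2] x = phiRed5 (phiRed5 x) := rfl
      rwa [he] at this
    have h4e : phiRed5^[4] x = phiRed5 (phiRed5 (phiRed5 (phiRed5 x))) := rfl
    rcases lt_or_gt_of_ne hx0 with h | h
    · obtain ⟨ha, hmem⟩ := case_C rfl hxl h hreg2
      rw [ha, h4e]
      exact ⟨by decide, hmem⟩
    · obtain ⟨ha, hmem⟩ := case_D rfl h hxu hreg2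
      rw [ha, h4e]
      exact ⟨by decide, hmem⟩
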